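/- Let 0 < α < 1, ρ = v^{α,1−α}, u = v^{γ,δ} with γ,δ ≥ 0, and let h : [−1,1]² → ℝ be measurable such that sup_{|y|<1} (uφ)(y) ∫_{−1}^1 |h(x,y)| u(x)^{−1} dx < ∞ and, for some s > 0 and C₀ > 0, A(τ) ≤ C₀ τ^s for all τ ∈ (0, 1/2], where A(τ) := sup_{y∈I_τ} (uφ)(y) ∫_{−1}^1 |h(x, y+τφ(y)/2) − h(x, y−τφ(y)/2)| u(x)^{−1} dx and I_τ := [−1+4τ², 1−4τ²]. Define (Hf)(y) := (1/π)∫_{−1}^1 h(x,y) f(x) ρ(x) dx. Then for every r with 1 < r ≤ s+1 there exists a constant C, independent of f, such that ‖Hf‖_{Z_{r−1}(uφ)} ≤ C·‖f uρ‖_∞ for every f with ‖f uρ‖_∞ < ∞; that is, H is a continuous operator from C_{uρ} into Z_{r−1}(uφ). -/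

import Mathlib

open Set Filter MeasureTheory intervalIntegral Polynomial
open scoped ENNReal

noncomputable section

/-- Jacobi weight `v^{a,b}(x) = (1-x)^a (1+x)^b`. -/
def jw (a b : ℝ) : ℝ → ℝ := fun x => (1 - x) ^ a * (1 + x) ^ b

/-- `φ(x) = √(1-x²)`. -/
def phiw : ℝ → ℝ := fun x => Real.sqrt (1 - x ^ 2)

/-- Weighted sup ("uniform") norm `‖g w‖_∞` over `(-1,1)`, valued in `ℝ≥0∞`. -/
def wnorm (w g : ℝ → ℝ) : ℝ≥0∞ := ⨆ x ∈ Ioo (-1 : ℝ) 1, ENNReal.ofReal |g x * w x|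

/-- Membership in the space `C_w`: continuity on `(-1,1)` together with the
endpoint conditions (`(gw)(x) → 0` at an endpoint where `w` vanishes, continuous
extendability at an endpoint where `w` does not vanish). -/
def memC (w g : ℝ → ℝ) : Prop :=
  ContinuousOn g (Ioo (-1 : ℝ) 1) ∧
  (w 1 = 0 → Tendsto (fun x => g x * w x) (nhdsWithin 1 (Iio (1 : ℝ))) (nhds 0)) ∧
  (w 1 ≠ 0 → ∃ L, Tendsto g (nhdsWithin 1 (Iio (1 : ℝ))) (nhds L)) ∧
  (w (-1) = 0 → Tendsto (fun x => g x * w x) (nhdsWithin (-1) (Ioi (-1 : ℝ))) (nhds 0)) ∧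
  (w (-1) ≠ 0 → ∃ L, Tendsto g (nhdsWithin (-1) (Ioi (-1 : ℝ))) (nhds L))

/-- The symmetric difference `Δ^k_{τφ} g(x)`. -/
def Dk (k : ℕ) (τ : ℝ) (g : ℝ → ℝ) (x : ℝ) : ℝ :=
  ∑ i ∈ Finset.range (k + 1),
    (-1 : ℝ) ^ i * (k.choose i : ℝ) * g (x + τ * phiw x / 2 * ((k : ℝ) - 2 * i))

/-- Main part of the φ-modulus of smoothness `Ω^k_φ(g,t)_w`. -/
def Om (k : ℕ) (w g : ℝ → ℝ) (t : ℝ) : ℝ≥0∞ :=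
  ⨆ (τ : ℝ) (_ : τ ∈ Ioc (0 : ℝ) t),
    ⨆ (x : ℝ) (_ : x ∈ Icc (-1 + (2 * (k : ℝ) * τ) ^ 2) (1 - (2 * (k : ℝ) * τ) ^ 2)),
      ENNReal.ofReal (w x * |Dk k τ g x|)

/-- Zygmund seminorm of order `r` built with the `k`-th modulus:
`sup_{t>0} Ω^k_φ(g,t)_w / t^r`. -/
def ZS (r : ℝ) (k : ℕ) (w g : ℝ → ℝ) : ℝ≥0∞ :=
  ⨆ (t : ℝ) (_ : 0 < t), Om k w g t / ENNReal.ofReal (t ^ r)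

/-- Zygmund norm `‖g‖_{Z_r(w)}` (with `k = ⌊r⌋ + 1`). -/
def Zn (r : ℝ) (w g : ℝ → ℝ) : ℝ≥0∞ := wnorm w g + ZS r (⌊r⌋ + 1).toNat w g

/-- Membership in the Zygmund space `Z_r(w)`. -/
def memZ (r : ℝ) (w g : ℝ → ℝ) : Prop := memC w g ∧ Zn r w g < ⊤

/-- Weighted error of best polynomial approximation `E_m(g)_w`. -/
def Eerr (m : ℕ) (w g : ℝ → ℝ) : ℝ≥0∞ :=
  ⨅ (P : Polynomial ℝ) (_ : P.natDegree ≤ m), wnorm w (fun x => g x - P.eval x)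

/-- Unweighted error of best uniform polynomial approximation on `[-1,1]`. -/
def EerrI (m : ℕ) (g : ℝ → ℝ) : ℝ≥0∞ :=
  ⨅ (P : Polynomial ℝ) (_ : P.natDegree ≤ m),
    ⨆ x ∈ Icc (-1 : ℝ) 1, ENNReal.ofReal |g x - P.eval x|




lemma jw_pos {a b x : ℝ} (h1 : -1 < x) (h2 : x < 1) : 0 < jw a b x := by
  have : (0:ℝ) < 1 - x := by linarith
  have : (0:ℝ) < 1 + x := by linarith
  exact mul_pos (Real.rpow_pos_of_pos (by linarith) _) (Real.rpow_pos_of_pos (by linarith) _)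

lemma jw_nonneg {a b x : ℝ} (h1 : -1 ≤ x) (h2 : x ≤ 1) : 0 ≤ jw a b x :=
  mul_nonneg (Real.rpow_nonneg (by linarith) _) (Real.rpow_nonneg (by linarith) _)

lemma phiw_nonneg (x : ℝ) : 0 ≤ phiw x := Real.sqrt_nonneg _

lemma phiw_pos {x : ℝ} (h1 : -1 < x) (h2 : x < 1) : 0 < phiw x := by
  apply Real.sqrt_pos.2; nlinarith

lemma phiw_sq {x : ℝ} (h1 : -1 ≤ x) (h2 : x ≤ 1) : phiw x ^ 2 = (1 - x) * (1 + x) := by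
  rw [phiw, Real.sq_sqrt (by nlinarith)]; ring

lemma pascal (m : ℕ) (G : ℕ → ℝ) :
    ∑ i ∈ Finset.range (m+2), (-1:ℝ)^i * ((m+1).choose i : ℝ) * G i
      = ∑ i ∈ Finset.range (m+1), (-1:ℝ)^i * (m.choose i : ℝ) * (G i - G (i+1)) := by
  have e1 : ∑ i ∈ Finset.range (m+2), (-1:ℝ)^i * ((m+1).choose i : ℝ) * G i
      = (∑ i ∈ Finset.range (m+1), (-1:ℝ)^(i+1) * (((m+1).choose (i+1)) : ℝ) * G (i+1))
        + (-1:ℝ)^0 * (((m+1).choose 0):ℝ) * G 0 :=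
    Finset.sum_range_succ' (fun i => (-1:ℝ)^i * ((m+1).choose i : ℝ) * G i) (m+1)
  have e2 : ∀ i, (-1:ℝ)^(i+1) * (((m+1).choose (i+1)) : ℝ) * G (i+1)
      = -((-1:ℝ)^i * (m.choose i : ℝ) * G (i+1)) + (-1:ℝ)^(i+1) * (m.choose (i+1) : ℝ) * G (i+1) := by
    intro i
    have : ((m+1).choose (i+1) : ℝ) = (m.choose i : ℝ) + (m.choose (i+1) : ℝ) := by
      exact_mod_cast congrArg (Nat.cast (R := ℝ)) (Nat.choose_succ_succ m i)
    rw [this]; ring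
  have e3 : ∑ i ∈ Finset.range (m+1), (-1:ℝ)^(i+1) * (m.choose (i+1) : ℝ) * G (i+1)
      = (∑ i ∈ Finset.range (m+1), (-1:ℝ)^i * (m.choose i : ℝ) * G i) - G 0 := by
    rw [Finset.sum_range_succ (fun i => (-1:ℝ)^(i+1) * (m.choose (i+1) : ℝ) * G (i+1)) m,
        Finset.sum_range_succ' (fun i => (-1:ℝ)^i * (m.choose i : ℝ) * G i) m]
    simp [Nat.choose_succ_self]
  rw [e1]
  simp only [e2]
  rw [Finset.sum_add_distrib, e3, Finset.sum_neg_distrib]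
  simp only [mul_sub, Finset.sum_sub_distrib]
  simp
  ring



set_option maxHeartbeats 1000000 in
lemma geom {k : ℕ} {τ x d : ℝ} (hk : 1 ≤ k) (hτ : 0 < τ)
    (hx1 : -1 + (2*(k:ℝ)*τ)^2 ≤ x) (hx2 : x ≤ 1 - (2*(k:ℝ)*τ)^2)
    (hd : |d| ≤ (k:ℝ) - 1) :
    ∃ τ' : ℝ, τ' ∈ Ioc (0:ℝ) (1/2) ∧ τ' ≤ 25/16 * τ ∧
      (x + τ*phiw x/2*d) ∈ Icc (-1 + 4*τ'^2) (1 - 4*τ'^2) ∧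
      τ' * phiw (x + τ*phiw x/2*d) = τ * phiw x ∧
      (16/25:ℝ)*(1-x) ≤ 1 - (x + τ*phiw x/2*d) ∧
      (16/25:ℝ)*(1+x) ≤ 1 + (x + τ*phiw x/2*d) ∧
      (16/25:ℝ)*phiw x ≤ phiw (x + τ*phiw x/2*d) := by
  set kR : ℝ := (k:ℝ) with hkR
  have hkR1 : (1:ℝ) ≤ kR := by rw [hkR]; exact_mod_cast hk
  have ha : 4*kR^2*τ^2 ≤ 1 - x := by linarith [hx2]
  have hb : 4*kR^2*τ^2 ≤ 1 + x := by linarith [hx1]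
  have hpos : (0:ℝ) < 4*kR^2*τ^2 :=
    mul_pos (mul_pos (by norm_num) (pow_pos (by linarith) 2)) (pow_pos hτ 2)
  have ha0 : (0:ℝ) < 1 - x := lt_of_lt_of_le hpos ha
  have hb0 : (0:ℝ) < 1 + x := lt_of_lt_of_le hpos hb
  have hx2' : x < 1 := by linarith
  have hx1' : -1 < x := by linarith
  have hb2 : 1 + x ≤ 2 := by linarith
  have ha2 : 1 - x ≤ 2 := by linarith
  have hP : 0 < phiw x := phiw_pos hx1' hx2'
  have hP2 : phiw x ^ 2 = (1-x)*(1+x) := phiw_sq hx1'.le hx2'.le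
  set c : ℝ := x + τ*phiw x/2*d with hc
  have hd0 : (0:ℝ) ≤ kR - 1 := by linarith
  have hAB : 0 < (1-x)*(1+x) := mul_pos ha0 hb0
  have h2 : |d|^2 ≤ (kR-1)^2 := pow_le_pow_left₀ (abs_nonneg d) hd 2
  have h2' : τ^2*|d|^2 ≤ τ^2*(kR-1)^2 := mul_le_mul_of_nonneg_left h2 (sq_nonneg τ)
  have h3 : τ^2*(kR-1)^2 ≤ τ^2*kR^2 :=
    mul_le_mul_of_nonneg_left (by nlinarith [hkR1]) (sq_nonneg τ)
  have s2 : τ^2*|d|^2 ≤ (1-x)/4 := by linarith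
  have s2b : τ^2*|d|^2 ≤ (1+x)/4 := by linarith
  have habs : |τ*phiw x/2*d| = τ*phiw x/2*|d| := by
    rw [abs_mul, abs_of_nonneg (by positivity : (0:ℝ) ≤ τ*phiw x/2)]
  have s1 : (τ*phiw x/2*|d|)^2 = (τ^2*|d|^2)*((1-x)*(1+x))/4 := by rw [← hP2]; ring
  have hshift1 : |τ*phiw x/2*d| ≤ 9/25 * (1-x) := by
    rw [habs]
    refine le_of_pow_le_pow_left₀ two_ne_zero (by linarith : (0:ℝ) ≤ 9/25*(1-x)) ?_
    rw [s1]
    have hint1 : (τ^2*|d|^2)*((1-x)*(1+x)) ≤ ((1-x)/4)*((1-x)*(1+x)) :=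
      mul_le_mul_of_nonneg_right s2 hAB.le
    have hint2 : ((1-x)*(1-x))*(1+x) ≤ ((1-x)*(1-x))*2 :=
      mul_le_mul_of_nonneg_left hb2 (mul_nonneg ha0.le ha0.le)
    linarith [hint1, hint2, sq_nonneg (1-x)]
  have hshift2 : |τ*phiw x/2*d| ≤ 9/25 * (1+x) := by
    rw [habs]
    refine le_of_pow_le_pow_left₀ two_ne_zero (by linarith : (0:ℝ) ≤ 9/25*(1+x)) ?_
    rw [s1]
    have hint1 : (τ^2*|d|^2)*((1-x)*(1+x)) ≤ ((1+x)/4)*((1-x)*(1+x)) :=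
      mul_le_mul_of_nonneg_right s2b hAB.le
    have hint2 : ((1+x)*(1+x))*(1-x) ≤ ((1+x)*(1+x))*2 :=
      mul_le_mul_of_nonneg_left ha2 (mul_nonneg hb0.le hb0.le)
    linarith [hint1, hint2, sq_nonneg (1+x)]
  have hc1 : 16/25*(1-x) ≤ 1 - c := by
    cases' (abs_le.mp hshift1) with l r; rw [hc]; linarith
  have hc2 : 16/25*(1+x) ≤ 1 + c := by
    cases' (abs_le.mp hshift2) with l r; rw [hc]; linarith
  have hc1' : (0:ℝ) < 1 - c := lt_of_lt_of_le (by linarith) hc1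
  have hc2' : (0:ℝ) < 1 + c := lt_of_lt_of_le (by linarith) hc2
  have hQ : 0 < phiw c := phiw_pos (by linarith) (by linarith)
  have hQ2 : phiw c ^ 2 = (1-c)*(1+c) := phiw_sq (by linarith) (by linarith)
  have hQP : 16/25 * phiw x ≤ phiw c := by
    refine le_of_pow_le_pow_left₀ two_ne_zero hQ.le ?_
    rw [hQ2]
    calc (16/25*phiw x)^2 = (16/25*(1-x))*(16/25*(1+x)) := by rw [mul_pow, hP2]; ring
      _ ≤ (1-c)*(1+c) := mul_le_mul hc1 hc2 (by linarith) hc1'.le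
  have hτk : 2*kR*τ ≤ 1 := by
    have hsq : (2*kR*τ)^2 ≤ 1 := by linarith
    linarith [sq_nonneg (2*kR*τ - 1), hsq]
  have hτle : τ*phiw x/phiw c ≤ 25/16*τ := by
    rw [div_le_iff₀ hQ]
    linarith [mul_le_mul_of_nonneg_left hQP hτ.le]
  have hτ'pos : 0 < τ*phiw x/phiw c := div_pos (mul_pos hτ hP) hQ
  have hkey : τ*phiw x/phiw c ≤ 1/2 ∧ 4*(τ*phiw x/phiw c)^2 ≤ 1 - c ∧
      4*(τ*phiw x/phiw c)^2 ≤ 1 + c := by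
    by_cases hk1 : k = 1
    · have hkR' : kR = 1 := by rw [hkR, hk1]; norm_num
      have hdz : d = 0 := by
        have : |d| ≤ 0 := by rw [hkR'] at hd; linarith
        exact abs_nonpos_iff.mp this
      have hcx : c = x := by rw [hc, hdz]; ring
      have hττ : τ*phiw x/phiw c = τ := by rw [hcx]; field_simp
      rw [hkR'] at ha hb hτk
      rw [hττ, hcx]
      refine ⟨by linarith, by linarith [ha], by linarith [hb]⟩
    · have hk2 : (2:ℝ) ≤ kR := by
        rw [hkR]; have h22 : 2 ≤ k := by omega
        exact_mod_cast h22
      have hτ4 : τ ≤ 1/4 := by nlinarith [hτk, hτ, hk2]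
      have hsq2 : (τ*phiw x/phiw c)^2 ≤ 625/256*τ^2 := by
        have := pow_le_pow_left₀ hτ'pos.le hτle 2
        calc (τ*phiw x/phiw c)^2 ≤ (25/16*τ)^2 := this
          _ = 625/256*τ^2 := by ring
      have hkk : (0:ℝ) ≤ kR^2 - 4 := by nlinarith [hk2]
      have hkτ : 256/25*τ^2 ≤ 16/25*(4*kR^2*τ^2) := by
        have h5 : 0 ≤ (kR^2-4)*τ^2 := mul_nonneg hkk (sq_nonneg τ)
        linarith
      have hha : 16/25*(4*kR^2*τ^2) ≤ 16/25*(1-x) :=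
        mul_le_mul_of_nonneg_left ha (by norm_num)
      have hhb : 16/25*(4*kR^2*τ^2) ≤ 16/25*(1+x) :=
        mul_le_mul_of_nonneg_left hb (by norm_num)
      exact ⟨by linarith, by linarith, by linarith⟩
  exact ⟨τ * phiw x / phiw c, ⟨hτ'pos, hkey.1⟩, hτle,
    ⟨by linarith [hkey.2.2], by linarith [hkey.2.1]⟩,
    by rw [div_mul_cancel₀ _ hQ.ne'], hc1, hc2, hQP⟩



lemma jw_meas (a b : ℝ) : Measurable (jw a b) := by unfold jw; fun_prop

lemma ae_mem_Ioo_of {S : Set ℝ} (hS : MeasurableSet S) (hsub : S ⊆ Icc (-1) 1) :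
    ∀ᵐ x ∂(MeasureTheory.volume.restrict S), x ∈ Ioo (-1:ℝ) 1 := by
  have h1 : ∀ᵐ x ∂(MeasureTheory.volume.restrict S), x ∈ S := ae_restrict_mem hS
  have hz : MeasureTheory.volume ({-1,1} : Set ℝ) = 0 :=
    (Set.toFinite _).countable.measure_zero _
  have h2 : ∀ᵐ x ∂(MeasureTheory.volume.restrict S), x ∉ ({-1,1} : Set ℝ) := by
    refine ae_restrict_of_ae ?_
    rw [ae_iff]
    have he : {a : ℝ | ¬ a ∉ ({-1,1} : Set ℝ)} = ({-1,1} : Set ℝ) := by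
      ext a
      simp only [Set.mem_setOf_eq, Set.mem_insert_iff, Set.mem_singleton_iff, not_not]
      try tauto
    rw [he]; exact hz
  filter_upwards [h1, h2] with x hx hne
  rcases hsub hx with ⟨l, r⟩
  simp only [Set.mem_insert_iff, Set.mem_singleton_iff, not_or] at hne
  exact ⟨lt_of_le_of_ne l (Ne.symm hne.1), lt_of_le_of_ne r hne.2⟩

lemma keyG (γ δ α : ℝ) (F : ℝ → ℝ) (hFmeas : Measurable F)
    (f : ℝ → ℝ) (hf : Measurable f) (M : ℝ)
    (hfM : ∀ x ∈ Ioo (-1:ℝ) 1, |f x * (jw γ δ x * jw α (1-α) x)| ≤ M)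
    (hI : IntervalIntegrable (fun x => |F x| / jw γ δ x) MeasureTheory.volume (-1) 1) :
    IntervalIntegrable (fun x => F x * f x * jw α (1-α) x) MeasureTheory.volume (-1) 1 ∧
    |∫ x in (-1:ℝ)..1, F x * f x * jw α (1-α) x| ≤
      M * ∫ x in (-1:ℝ)..1, |F x| / jw γ δ x := by
  have hptw : ∀ x ∈ Ioo (-1:ℝ) 1, |F x * f x * jw α (1-α) x| ≤ M * (|F x| / jw γ δ x) := by
    intro x hx
    have hu : 0 < jw γ δ x := jw_pos hx.1 hx.2
    have h1 : |f x * jw α (1-α) x| ≤ M / jw γ δ x := by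
      rw [le_div_iff₀ hu]
      calc |f x * jw α (1-α) x| * jw γ δ x
          = |f x * (jw γ δ x * jw α (1-α) x)| := by
            have e1 : |f x * jw α (1-α) x| * jw γ δ x = |f x * jw α (1-α) x| * |jw γ δ x| := by
              rw [abs_of_nonneg hu.le]
            rw [e1, ← abs_mul]
            congr 1; ring
        _ ≤ M := hfM x hx
    calc |F x * f x * jw α (1-α) x| = |F x| * |f x * jw α (1-α) x| := by
          rw [mul_assoc, abs_mul]
      _ ≤ |F x| * (M / jw γ δ x) := mul_le_mul_of_nonneg_left h1 (abs_nonneg _)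
      _ = M * (|F x| / jw γ δ x) := by ring
  have hIM : IntervalIntegrable (fun x => M * (|F x| / jw γ δ x))
      MeasureTheory.volume (-1) 1 := hI.const_mul M
  have hmeasF : AEStronglyMeasurable (fun x => F x * f x * jw α (1-α) x)
      (MeasureTheory.volume.restrict (Set.uIoc (-1:ℝ) 1)) :=
    ((hFmeas.mul hf).mul (jw_meas _ _)).aestronglyMeasurable
  have hsub : Set.uIoc (-1:ℝ) 1 ⊆ Icc (-1) 1 := by
    rw [Set.uIoc_of_le (by norm_num : (-1:ℝ) ≤ 1)]; exact Ioc_subset_Icc_self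
  have hae : (fun x => ‖F x * f x * jw α (1-α) x‖)
      ≤ᵐ[MeasureTheory.volume.restrict (Set.uIoc (-1:ℝ) 1)]
      fun x => ‖M * (|F x| / jw γ δ x)‖ := by
    filter_upwards [ae_mem_Ioo_of measurableSet_uIoc hsub] with x hx
    have hu : 0 < jw γ δ x := jw_pos hx.1 hx.2
    have hnn : 0 ≤ M * (|F x| / jw γ δ x) :=
      le_trans (abs_nonneg _) (hptw x hx)
    simp only [Real.norm_eq_abs]
    rw [abs_of_nonneg hnn]
    exact hptw x hx
  have hint : IntervalIntegrable (fun x => F x * f x * jw α (1-α) x)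
      MeasureTheory.volume (-1) 1 := hIM.mono_fun hmeasF hae
  refine ⟨hint, ?_⟩
  have haeI : (fun x => |F x * f x * jw α (1-α) x|)
      ≤ᵐ[MeasureTheory.volume.restrict (Icc (-1:ℝ) 1)]
      fun x => M * (|F x| / jw γ δ x) := by
    filter_upwards [ae_mem_Ioo_of measurableSet_Icc (subset_rfl)] with x hx
    exact hptw x hx
  calc |∫ x in (-1:ℝ)..1, F x * f x * jw α (1-α) x|
      ≤ ∫ x in (-1:ℝ)..1, |F x * f x * jw α (1-α) x| :=
        intervalIntegral.abs_integral_le_integral_abs (by norm_num)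
    _ ≤ ∫ x in (-1:ℝ)..1, M * (|F x| / jw γ δ x) :=
        intervalIntegral.integral_mono_ae_restrict (by norm_num) hint.abs hIM haeI
    _ = M * ∫ x in (-1:ℝ)..1, |F x| / jw γ δ x := intervalIntegral.integral_const_mul _ _

lemma keyD (γ δ α : ℝ) (h : ℝ → ℝ → ℝ) (hmeas : Measurable (Function.uncurry h))
    (f : ℝ → ℝ) (hf : Measurable f) (M : ℝ)
    (hfM : ∀ x ∈ Ioo (-1:ℝ) 1, |f x * (jw γ δ x * jw α (1-α) x)| ≤ M)
    (y₁ y₂ : ℝ)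
    (hI1 : IntervalIntegrable (fun x => |h x y₁| / jw γ δ x) MeasureTheory.volume (-1) 1)
    (hI2 : IntervalIntegrable (fun x => |h x y₂| / jw γ δ x) MeasureTheory.volume (-1) 1)
    (hI12 : IntervalIntegrable (fun x => |h x y₁ - h x y₂| / jw γ δ x) MeasureTheory.volume (-1) 1) :
    |(∫ x in (-1:ℝ)..1, h x y₁ * f x * jw α (1-α) x) -
        ∫ x in (-1:ℝ)..1, h x y₂ * f x * jw α (1-α) x| ≤
      M * ∫ x in (-1:ℝ)..1, |h x y₁ - h x y₂| / jw γ δ x := by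
  have hm1 : Measurable (fun x => h x y₁) :=
    hmeas.comp (measurable_id.prodMk measurable_const)
  have hm2 : Measurable (fun x => h x y₂) :=
    hmeas.comp (measurable_id.prodMk measurable_const)
  have k1 := keyG γ δ α _ hm1 f hf M hfM hI1
  have k2 := keyG γ δ α _ hm2 f hf M hfM hI2
  have k12 := keyG γ δ α (fun x => h x y₁ - h x y₂) (hm1.sub hm2) f hf M hfM hI12
  have e : ∫ x in (-1:ℝ)..1, (h x y₁ - h x y₂) * f x * jw α (1-α) x
      = (∫ x in (-1:ℝ)..1, h x y₁ * f x * jw α (1-α) x) -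
          ∫ x in (-1:ℝ)..1, h x y₂ * f x * jw α (1-α) x := by
    rw [← intervalIntegral.integral_sub k1.1 k2.1]
    congr 1; funext x; ring
  rw [← e]; exact k12.2

set_option maxHeartbeats 3200000 in
/-- Under the boundedness condition on `(uφ)(y)∫|h(x,y)|u(x)⁻¹dx`
and the smoothness condition `A(τ) ≤ C₀ τ^s` for `τ ∈ (0,1/2]`, for every
`1 < r ≤ s+1` there is `C`, independent of `f`, with
`‖Hf‖_{Z_{r-1}(uφ)} ≤ C ‖f uρ‖_∞` for every `f` with finite `‖f uρ‖_∞`, i.e.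
`H : C_{uρ} → Z_{r-1}(uφ)` is continuous. -/
theorem statement12 (α γ δ s C₀ B : ℝ) (hα0 : 0 < α) (hα1 : α < 1)
    (hγ : 0 ≤ γ) (hδ : 0 ≤ δ) (hs : 0 < s) (hC₀ : 0 < C₀)
    (h : ℝ → ℝ → ℝ) (hmeas : Measurable (Function.uncurry h))
    (hB : ∀ y ∈ Ioo (-1 : ℝ) 1,
      IntervalIntegrable (fun x => |h x y| / jw γ δ x) MeasureTheory.volume (-1) 1 ∧
      (jw γ δ y * phiw y) * ∫ x in (-1 : ℝ)..1, |h x y| / jw γ δ x ≤ B)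
    (hA : ∀ τ ∈ Ioc (0 : ℝ) (1 / 2), ∀ y ∈ Icc (-1 + 4 * τ ^ 2) (1 - 4 * τ ^ 2),
      IntervalIntegrable
          (fun x => |h x (y + τ * phiw y / 2) - h x (y - τ * phiw y / 2)| / jw γ δ x)
          MeasureTheory.volume (-1) 1 ∧
      (jw γ δ y * phiw y) *
          ∫ x in (-1 : ℝ)..1,
            |h x (y + τ * phiw y / 2) - h x (y - τ * phiw y / 2)| / jw γ δ x ≤
        C₀ * τ ^ s) :
    ∀ r : ℝ, 1 < r → r ≤ s + 1 →
      ∃ C : ℝ, 0 < C ∧ ∀ f : ℝ → ℝ, Measurable f →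
        wnorm (fun x => jw γ δ x * jw α (1 - α) x) f < ⊤ →
        Zn (r - 1) (fun x => jw γ δ x * phiw x)
            (fun y => (1 / Real.pi) * ∫ x in (-1 : ℝ)..1, h x y * f x * jw α (1 - α) x) ≤
          ENNReal.ofReal C * wnorm (fun x => jw γ δ x * jw α (1 - α) x) f := by
  intro r hr1 hr2
  have hpi : (0:ℝ) < Real.pi := Real.pi_pos
  set k : ℕ := (⌊r - 1⌋ + 1).toNat with hkdef
  have hfl : (0:ℤ) ≤ ⌊r - 1⌋ := Int.floor_nonneg.mpr (by linarith)
  have hk1 : 1 ≤ k := by rw [hkdef]; omega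
  have hrs : r - 1 ≤ s := by linarith
  have hr0 : 0 < r - 1 := by linarith
  have hB0 : 0 ≤ B := by
    have h0 := (hB 0 ⟨by norm_num, by norm_num⟩).2
    refine le_trans ?_ h0
    have hI0 : 0 ≤ ∫ x in (-1:ℝ)..1, |h x 0| / jw γ δ x :=
      intervalIntegral.integral_nonneg (by norm_num)
        (fun u hu => div_nonneg (abs_nonneg _) (jw_nonneg hu.1 hu.2))
    exact mul_nonneg (mul_nonneg (jw_pos (by norm_num) (by norm_num)).le (phiw_nonneg 0)) hI0
  set E : ℝ := γ + δ + 1 + s with hEdef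
  set Kc : ℝ := 2^k * (25/16:ℝ)^E * C₀ / Real.pi with hKcdef
  have hq : (0:ℝ) < (25/16:ℝ)^E := Real.rpow_pos_of_pos (by norm_num) _
  have hKc0 : 0 < Kc := by rw [hKcdef]; positivity
  refine ⟨B / Real.pi + Kc + 1, by nlinarith [div_nonneg hB0 hpi.le], ?_⟩
  intro f hf hfin
  set Me := wnorm (fun x => jw γ δ x * jw α (1 - α) x) f with hMe
  set M : ℝ := Me.toReal with hM
  have hM0 : 0 ≤ M := ENNReal.toReal_nonneg
  have hfM : ∀ x ∈ Ioo (-1:ℝ) 1, |f x * (jw γ δ x * jw α (1 - α) x)| ≤ M := by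
    intro x hx
    have h1 : ENNReal.ofReal |f x * (jw γ δ x * jw α (1 - α) x)| ≤ Me := by
      rw [hMe, wnorm]
      exact le_iSup₂ (f := fun x (_ : x ∈ Ioo (-1:ℝ) 1) =>
        ENNReal.ofReal |f x * (jw γ δ x * jw α (1 - α) x)|) x hx
    exact (ENNReal.ofReal_le_iff_le_toReal hfin.ne).mp h1
  set g : ℝ → ℝ :=
    fun y => (1 / Real.pi) * ∫ x in (-1 : ℝ)..1, h x y * f x * jw α (1 - α) x with hg
  have hCM : 0 ≤ C₀ * M / Real.pi := div_nonneg (mul_nonneg hC₀.le hM0) hpi.le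
  -- uniform bound
  have hsingle : ∀ y ∈ Ioo (-1:ℝ) 1, |g y * (jw γ δ y * phiw y)| ≤ B * M / Real.pi := by
    intro y hy
    have hm1 : Measurable (fun x => h x y) :=
      hmeas.comp (measurable_id.prodMk measurable_const)
    have kg := keyG γ δ α _ hm1 f hf M hfM (hB y hy).1
    have hw : 0 ≤ jw γ δ y * phiw y := mul_nonneg (jw_pos hy.1 hy.2).le (phiw_nonneg y)
    have hIbd := (hB y hy).2
    have habs : |g y * (jw γ δ y * phiw y)| =
        (1/Real.pi) * |∫ x in (-1:ℝ)..1, h x y * f x * jw α (1-α) x| * (jw γ δ y * phiw y) := by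
      rw [hg, abs_mul, abs_mul, abs_of_nonneg hw,
        abs_of_nonneg (by positivity : (0:ℝ) ≤ 1/Real.pi)]
    rw [habs]
    calc (1/Real.pi) * |∫ x in (-1:ℝ)..1, h x y * f x * jw α (1-α) x| * (jw γ δ y * phiw y)
        ≤ (1/Real.pi) * (M * ∫ x in (-1:ℝ)..1, |h x y| / jw γ δ x) * (jw γ δ y * phiw y) := by
          exact mul_le_mul_of_nonneg_right
            (mul_le_mul_of_nonneg_left kg.2 (by positivity)) hw
      _ = (M/Real.pi) * ((jw γ δ y * phiw y) * ∫ x in (-1:ℝ)..1, |h x y| / jw γ δ x) := by ring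
      _ ≤ (M/Real.pi) * B := mul_le_mul_of_nonneg_left hIbd (div_nonneg hM0 hpi.le)
      _ = B * M / Real.pi := by ring
  -- pair bound
  have hpair : ∀ τ' ∈ Ioc (0:ℝ) (1/2), ∀ c ∈ Icc (-1 + 4*τ'^2) (1 - 4*τ'^2),
      (jw γ δ c * phiw c) * |g (c + τ'*phiw c/2) - g (c - τ'*phiw c/2)|
        ≤ C₀ * M / Real.pi * τ'^s := by
    intro τ' hτ' c hc
    have hτ'0 : 0 < τ' := hτ'.1
    have h41 : 4*τ'^2 ≤ 1 - c := by have := hc.2; linarith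
    have h42 : 4*τ'^2 ≤ 1 + c := by have := hc.1; linarith
    have hc1' : (0:ℝ) < 1 - c := lt_of_lt_of_le (by positivity) h41
    have hc2' : (0:ℝ) < 1 + c := lt_of_lt_of_le (by positivity) h42
    have hcI : c ∈ Ioo (-1:ℝ) 1 := ⟨by linarith, by linarith⟩
    have hQ : 0 < phiw c := phiw_pos hcI.1 hcI.2
    have hQ2 : phiw c^2 = (1-c)*(1+c) := phiw_sq hcI.1.le hcI.2.le
    have hcb2 : 1 + c ≤ 2 := by linarith
    have hca2 : 1 - c ≤ 2 := by linarith
    have hE0 : (τ'*phiw c/2)^2 = τ'^2*((1-c)*(1+c))/4 := by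
      rw [show (τ'*phiw c/2)^2 = τ'^2*phiw c^2/4 from by ring, hQ2]
    have hlt1 : τ'*phiw c/2 < 1 - c := by
      refine lt_of_pow_lt_pow_left₀ 2 hc1'.le ?_
      rw [hE0]
      have hint1 : τ'^2*((1-c)*(1+c)) ≤ ((1-c)/4)*((1-c)*(1+c)) :=
        mul_le_mul_of_nonneg_right (by linarith) (mul_nonneg hc1'.le hc2'.le)
      have hint2 : ((1-c)*(1-c))*(1+c) ≤ ((1-c)*(1-c))*2 :=
        mul_le_mul_of_nonneg_left hcb2 (mul_nonneg hc1'.le hc1'.le)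
      have hsq : 0 < (1-c)^2 := pow_pos hc1' 2
      linarith [hint1, hint2]
    have hlt2 : τ'*phiw c/2 < 1 + c := by
      refine lt_of_pow_lt_pow_left₀ 2 hc2'.le ?_
      rw [hE0]
      have hint1 : τ'^2*((1-c)*(1+c)) ≤ ((1+c)/4)*((1-c)*(1+c)) :=
        mul_le_mul_of_nonneg_right (by linarith) (mul_nonneg hc1'.le hc2'.le)
      have hint2 : ((1+c)*(1+c))*(1-c) ≤ ((1+c)*(1+c))*2 :=
        mul_le_mul_of_nonneg_left hca2 (mul_nonneg hc2'.le hc2'.le)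
      have hsq : 0 < (1+c)^2 := pow_pos hc2' 2
      linarith [hint1, hint2]
    have hstep : 0 < τ'*phiw c/2 := by positivity
    have hy1 : c + τ'*phiw c/2 ∈ Ioo (-1:ℝ) 1 := ⟨by linarith, by linarith⟩
    have hy2 : c - τ'*phiw c/2 ∈ Ioo (-1:ℝ) 1 := ⟨by linarith, by linarith⟩
    have hD := keyD γ δ α h hmeas f hf M hfM (c + τ'*phiw c/2) (c - τ'*phiw c/2)
      (hB _ hy1).1 (hB _ hy2).1 (hA τ' hτ' c hc).1
    have hA2 := (hA τ' hτ' c hc).2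
    have hgdiff : g (c + τ'*phiw c/2) - g (c - τ'*phiw c/2)
        = (1/Real.pi) *
          ((∫ x in (-1:ℝ)..1, h x (c + τ'*phiw c/2) * f x * jw α (1-α) x) -
            ∫ x in (-1:ℝ)..1, h x (c - τ'*phiw c/2) * f x * jw α (1-α) x) := by
      rw [hg]; ring
    have hw : 0 ≤ jw γ δ c * phiw c := mul_nonneg (jw_pos hcI.1 hcI.2).le hQ.le
    rw [hgdiff, abs_mul, abs_of_nonneg (by positivity : (0:ℝ) ≤ 1/Real.pi)]
    calc (jw γ δ c * phiw c) * ((1/Real.pi) *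
          |(∫ x in (-1:ℝ)..1, h x (c + τ'*phiw c/2) * f x * jw α (1-α) x) -
            ∫ x in (-1:ℝ)..1, h x (c - τ'*phiw c/2) * f x * jw α (1-α) x|)
        ≤ (jw γ δ c * phiw c) * ((1/Real.pi) *
            (M * ∫ x in (-1:ℝ)..1,
              |h x (c + τ'*phiw c/2) - h x (c - τ'*phiw c/2)| / jw γ δ x)) :=
          mul_le_mul_of_nonneg_left (mul_le_mul_of_nonneg_left hD (by positivity)) hw
      _ = (M/Real.pi) * ((jw γ δ c * phiw c) * ∫ x in (-1:ℝ)..1,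
            |h x (c + τ'*phiw c/2) - h x (c - τ'*phiw c/2)| / jw γ δ x) := by ring
      _ ≤ (M/Real.pi) * (C₀ * τ'^s) :=
          mul_le_mul_of_nonneg_left hA2 (div_nonneg hM0 hpi.le)
      _ = C₀ * M / Real.pi * τ'^s := by ring
  -- modulus bound
  have hOm : ∀ t : ℝ, 0 < t → Om k (fun x => jw γ δ x * phiw x) g t
      ≤ ENNReal.ofReal ((2:ℝ)^k * (25/16:ℝ)^E * (C₀ * M / Real.pi)) *
          ENNReal.ofReal (t^(r-1)) := by
    intro t ht
    rw [← ENNReal.ofReal_mul (by positivity)]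
    refine iSup₂_le fun τ hτm => iSup₂_le fun x hx => ENNReal.ofReal_le_ofReal ?_
    obtain ⟨m, hm⟩ : ∃ m, k = m + 1 := ⟨k - 1, by omega⟩
    have hτ0 : 0 < τ := hτm.1
    have hkR1 : (1:ℝ) ≤ (k:ℝ) := by exact_mod_cast hk1
    have hsqpos : (0:ℝ) < (2*(k:ℝ)*τ)^2 := by positivity
    have hxI : x ∈ Ioo (-1:ℝ) 1 :=
      ⟨by have := hx.1; linarith, by have := hx.2; linarith⟩
    have hP : 0 < phiw x := phiw_pos hxI.1 hxI.2
    have hτhalf : τ ≤ 1/2 := by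
      have hsq : (2*(k:ℝ)*τ)^2 ≤ 1 := by have := hx.1; have := hx.2; linarith
      have h2k : 2*(k:ℝ)*τ ≤ 1 := by nlinarith [sq_nonneg (2*(k:ℝ)*τ - 1)]
      nlinarith [mul_nonneg (by linarith : (0:ℝ) ≤ 2*(k:ℝ) - 2) hτ0.le]
    have hw : 0 ≤ jw γ δ x * phiw x := mul_nonneg (jw_pos hxI.1 hxI.2).le hP.le
    set G : ℕ → ℝ := fun i => g (x + τ * phiw x / 2 * ((k : ℝ) - 2 * i)) with hG
    have hEach : ∀ i : ℕ, i < k → (jw γ δ x * phiw x) * |G i - G (i+1)|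
        ≤ (25/16:ℝ)^E * (C₀*M/Real.pi) * τ^s := by
      intro i hi
      have hiR : (i:ℝ) + 1 ≤ (k:ℝ) := by exact_mod_cast hi
      have hi0 : (0:ℝ) ≤ (i:ℝ) := Nat.cast_nonneg i
      have hd : |(k:ℝ) - 2*i - 1| ≤ (k:ℝ) - 1 :=
        abs_le.mpr ⟨by linarith, by linarith⟩
      obtain ⟨τ', ⟨hτ'0, hτ'half⟩, hτ'le, hcmem, hτ'eq, hA1, hA2p, hAphi⟩ :=
        geom hk1 hτ0 hx.1 hx.2 hd
      set c : ℝ := x + τ*phiw x/2*((k:ℝ) - 2*(i:ℝ) - 1) with hcdef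
      have hQc : 0 < phiw c := lt_of_lt_of_le (by positivity) hAphi
      have he1 : c + τ'*phiw c/2 = x + τ * phiw x / 2 * ((k : ℝ) - 2 * (i:ℝ)) := by
        rw [show c + τ'*phiw c/2 = c + (τ' * phiw c)/2 from by ring, hτ'eq, hcdef]; ring
      have he2 : c - τ'*phiw c/2 = x + τ * phiw x / 2 * ((k : ℝ) - 2 * ((i:ℝ)+1)) := by
        rw [show c - τ'*phiw c/2 = c - (τ' * phiw c)/2 from by ring, hτ'eq, hcdef]; ring
      have hp := hpair τ' ⟨hτ'0, hτ'half⟩ c hcmem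
      rw [he1, he2] at hp
      have hGi : G i = g (x + τ * phiw x / 2 * ((k : ℝ) - 2 * (i:ℝ))) := rfl
      have hGi1 : G (i+1) = g (x + τ * phiw x / 2 * ((k : ℝ) - 2 * ((i:ℝ)+1))) := by
        simp only [hG]; push_cast; rfl
      have hux : 0 < jw γ δ x := jw_pos hxI.1 hxI.2
      have ha0 : (0:ℝ) < 1 - x := by linarith [hxI.2]
      have hb0 : (0:ℝ) < 1 + x := by linarith [hxI.1]
      have hc1'' : (0:ℝ) < 1 - c := lt_of_lt_of_le (mul_pos (by norm_num) ha0) hA1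
      have hc2'' : (0:ℝ) < 1 + c := lt_of_lt_of_le (mul_pos (by norm_num) hb0) hA2p
      have hucq : (16/25:ℝ)^(γ+δ) * jw γ δ x ≤ jw γ δ c := by
        have hg1 : ((16/25:ℝ)*(1-x))^γ ≤ (1-c)^γ :=
          Real.rpow_le_rpow (by positivity) hA1 hγ
        have hg2 : ((16/25:ℝ)*(1+x))^δ ≤ (1+c)^δ :=
          Real.rpow_le_rpow (by positivity) hA2p hδ
        have e1 : ((16/25:ℝ)*(1-x))^γ = (16/25:ℝ)^γ * (1-x)^γ :=
          Real.mul_rpow (by norm_num) ha0.le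
        have e2 : ((16/25:ℝ)*(1+x))^δ = (16/25:ℝ)^δ * (1+x)^δ :=
          Real.mul_rpow (by norm_num) hb0.le
        have e3 : (16/25:ℝ)^γ * (16/25:ℝ)^δ = (16/25:ℝ)^(γ+δ) :=
          (Real.rpow_add (by norm_num) _ _).symm
        calc (16/25:ℝ)^(γ+δ) * jw γ δ x
            = (((16/25:ℝ)*(1-x))^γ) * (((16/25:ℝ)*(1+x))^δ) := by
              rw [e1, e2, ← e3, jw]; ring
          _ ≤ (1-c)^γ * (1+c)^δ :=
              mul_le_mul hg1 hg2 (Real.rpow_nonneg (mul_nonneg (by norm_num) hb0.le) _)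
                (Real.rpow_nonneg hc1''.le _)
          _ = jw γ δ c := rfl
      have htrans : jw γ δ x * phiw x ≤ (25/16:ℝ)^(γ+δ+1) * (jw γ δ c * phiw c) := by
        have hjc : 0 < jw γ δ c := jw_pos (by linarith) (by linarith)
        have e4 : (16/25:ℝ)^(γ+δ+1) = (16/25:ℝ)^(γ+δ) * (16/25:ℝ) := by
          rw [Real.rpow_add (by norm_num), Real.rpow_one]
        have h1 : (16/25:ℝ)^(γ+δ+1) * (jw γ δ x * phiw x) ≤ jw γ δ c * phiw c := by
          rw [e4]
          calc (16/25:ℝ)^(γ+δ) * (16/25:ℝ) * (jw γ δ x * phiw x)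
              = ((16/25:ℝ)^(γ+δ) * jw γ δ x) * ((16/25:ℝ) * phiw x) := by ring
            _ ≤ jw γ δ c * phiw c :=
                mul_le_mul hucq hAphi (by positivity) hjc.le
        have h3 : (25/16:ℝ)^(γ+δ+1) * (16/25:ℝ)^(γ+δ+1) = 1 := by
          rw [← Real.mul_rpow (by norm_num) (by norm_num)]
          norm_num
        calc jw γ δ x * phiw x
            = (25/16:ℝ)^(γ+δ+1) * ((16/25:ℝ)^(γ+δ+1) * (jw γ δ x * phiw x)) := by
              rw [← mul_assoc, h3, one_mul]
          _ ≤ (25/16:ℝ)^(γ+δ+1) * (jw γ δ c * phiw c) :=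
              mul_le_mul_of_nonneg_left h1 (Real.rpow_nonneg (by norm_num) _)
      have hts : τ'^s ≤ (25/16:ℝ)^s * τ^s := by
        calc τ'^s ≤ (25/16*τ)^s := Real.rpow_le_rpow hτ'0.le hτ'le hs.le
          _ = (25/16:ℝ)^s * τ^s := Real.mul_rpow (by norm_num) hτ0.le
      have hre : (25/16:ℝ)^(γ+δ+1) * (25/16:ℝ)^s = (25/16:ℝ)^E := by
        rw [← Real.rpow_add (by norm_num), hEdef]
      rw [hGi, hGi1]
      calc (jw γ δ x * phiw x) *
            |g (x + τ * phiw x / 2 * ((k : ℝ) - 2 * (i:ℝ))) -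
              g (x + τ * phiw x / 2 * ((k : ℝ) - 2 * ((i:ℝ)+1)))|
          ≤ ((25/16:ℝ)^(γ+δ+1) * (jw γ δ c * phiw c)) *
            |g (x + τ * phiw x / 2 * ((k : ℝ) - 2 * (i:ℝ))) -
              g (x + τ * phiw x / 2 * ((k : ℝ) - 2 * ((i:ℝ)+1)))| :=
            mul_le_mul_of_nonneg_right htrans (abs_nonneg _)
        _ = (25/16:ℝ)^(γ+δ+1) * ((jw γ δ c * phiw c) *
            |g (x + τ * phiw x / 2 * ((k : ℝ) - 2 * (i:ℝ))) -
              g (x + τ * phiw x / 2 * ((k : ℝ) - 2 * ((i:ℝ)+1)))|) := by ring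
        _ ≤ (25/16:ℝ)^(γ+δ+1) * (C₀ * M / Real.pi * τ'^s) :=
            mul_le_mul_of_nonneg_left hp (Real.rpow_nonneg (by norm_num) _)
        _ ≤ (25/16:ℝ)^(γ+δ+1) * (C₀ * M / Real.pi * ((25/16:ℝ)^s * τ^s)) :=
            mul_le_mul_of_nonneg_left (mul_le_mul_of_nonneg_left hts hCM)
              (Real.rpow_nonneg (by norm_num) _)
        _ = ((25/16:ℝ)^(γ+δ+1) * (25/16:ℝ)^s) * (C₀*M/Real.pi) * τ^s := by ring
        _ = (25/16:ℝ)^E * (C₀*M/Real.pi) * τ^s := by rw [hre]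
    have hid0 : Dk k τ g x = ∑ i ∈ Finset.range (m+2), (-1:ℝ)^i * ((m+1).choose i : ℝ) * G i := by
      rw [show Dk k τ g x = ∑ i ∈ Finset.range (k+1), (-1:ℝ)^i * (k.choose i:ℝ) * G i from rfl, hm]
    have hid : Dk k τ g x = ∑ i ∈ Finset.range k, (-1:ℝ)^i * (m.choose i : ℝ) * (G i - G (i+1)) := by
      rw [hid0, pascal m G, ← hm]
    have hDkb : |Dk k τ g x| ≤ ∑ i ∈ Finset.range k, (m.choose i : ℝ) * |G i - G (i+1)| := by
      rw [hid]
      refine le_trans (Finset.abs_sum_le_sum_abs _ _) (Finset.sum_le_sum fun i _ => ?_)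
      rw [abs_mul, abs_mul, abs_pow, abs_neg, abs_one, one_pow, one_mul, Nat.abs_cast]
    have hchoose : ∑ i ∈ Finset.range k, (m.choose i : ℝ) = (2:ℝ)^m := by
      rw [hm]
      exact_mod_cast congrArg (Nat.cast (R := ℝ)) (Nat.sum_range_choose m)
    have hτs : τ^s ≤ t^(r-1) := by
      calc τ^s ≤ τ^(r-1) :=
            Real.rpow_le_rpow_of_exponent_ge hτ0 (by linarith) (by linarith)
        _ ≤ t^(r-1) := Real.rpow_le_rpow hτ0.le hτm.2 (by linarith)
    have hbnn : 0 ≤ (25/16:ℝ)^E * (C₀*M/Real.pi) := mul_nonneg hq.le hCM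
    calc (jw γ δ x * phiw x) * |Dk k τ g x|
        ≤ (jw γ δ x * phiw x) * ∑ i ∈ Finset.range k, (m.choose i : ℝ) * |G i - G (i+1)| :=
          mul_le_mul_of_nonneg_left hDkb hw
      _ = ∑ i ∈ Finset.range k, (m.choose i : ℝ) * ((jw γ δ x * phiw x) * |G i - G (i+1)|) := by
          rw [Finset.mul_sum]; exact Finset.sum_congr rfl fun i _ => by ring
      _ ≤ ∑ i ∈ Finset.range k, (m.choose i : ℝ) * ((25/16:ℝ)^E * (C₀*M/Real.pi) * τ^s) :=
          Finset.sum_le_sum fun i hi =>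
            mul_le_mul_of_nonneg_left (hEach i (Finset.mem_range.mp hi)) (Nat.cast_nonneg _)
      _ = (2:ℝ)^m * ((25/16:ℝ)^E * (C₀*M/Real.pi) * τ^s) := by
          rw [← Finset.sum_mul, hchoose]
      _ ≤ (2:ℝ)^k * ((25/16:ℝ)^E * (C₀*M/Real.pi) * τ^s) := by
          refine mul_le_mul_of_nonneg_right ?_
            (mul_nonneg hbnn (Real.rpow_nonneg hτ0.le _))
          exact pow_le_pow_right₀ (by norm_num) (by omega)
      _ ≤ (2:ℝ)^k * ((25/16:ℝ)^E * (C₀*M/Real.pi) * t^(r-1)) := by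
          refine mul_le_mul_of_nonneg_left ?_ (by positivity)
          exact mul_le_mul_of_nonneg_left hτs hbnn
      _ = (2:ℝ)^k * (25/16:ℝ)^E * (C₀ * M / Real.pi) * t^(r-1) := by ring
  -- Zygmund seminorm bound
  have hZS : ZS (r-1) k (fun x => jw γ δ x * phiw x) g
      ≤ ENNReal.ofReal ((2:ℝ)^k * (25/16:ℝ)^E * (C₀*M/Real.pi)) := by
    refine iSup₂_le fun t ht => ?_
    exact ENNReal.div_le_of_le_mul (hOm t ht)
  have hWn : wnorm (fun x => jw γ δ x * phiw x) g ≤ ENNReal.ofReal (B*M/Real.pi) := by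
    rw [wnorm]
    exact iSup₂_le fun y hy => ENNReal.ofReal_le_ofReal (hsingle y hy)
  have hZn : Zn (r-1) (fun x => jw γ δ x * phiw x) g
      = wnorm (fun x => jw γ δ x * phiw x) g + ZS (r-1) k (fun x => jw γ δ x * phiw x) g := by
    rw [Zn, hkdef]
  calc Zn (r-1) (fun x => jw γ δ x * phiw x) g
      ≤ ENNReal.ofReal (B*M/Real.pi) +
          ENNReal.ofReal ((2:ℝ)^k * (25/16:ℝ)^E * (C₀*M/Real.pi)) := by
        rw [hZn]; exact add_le_add hWn hZS
    _ = ENNReal.ofReal (B*M/Real.pi + (2:ℝ)^k * (25/16:ℝ)^E * (C₀*M/Real.pi)) :=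
        (ENNReal.ofReal_add (div_nonneg (mul_nonneg hB0 hM0) hpi.le)
          (mul_nonneg (mul_nonneg (by positivity) hq.le) hCM)).symm
    _ ≤ ENNReal.ofReal ((B / Real.pi + Kc + 1) * M) := by
        refine ENNReal.ofReal_le_ofReal ?_
        have he : B*M/Real.pi + (2:ℝ)^k * (25/16:ℝ)^E * (C₀*M/Real.pi)
            = (B / Real.pi + Kc) * M := by
          rw [hKcdef]; field_simp
        rw [he]
        exact mul_le_mul_of_nonneg_right (by linarith) hM0
    _ = ENNReal.ofReal (B / Real.pi + Kc + 1) * Me := by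
        rw [ENNReal.ofReal_mul (by nlinarith [div_nonneg hB0 hpi.le]), hM,
          ENNReal.ofReal_toReal hfin.ne]
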